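/- arXiv:2503.07542 — 3 statements merged into one kernel-verified Lean document; each statement's English description precedes it below -/
import Mathlib

section
/- Let R be a commutative ring, Φ = (Φ₁, …, Φ_a) : R^{a+r} → R^a an R-linear map, and u : R^m → R^m an R-linear isomorphism with component functionals u₁, …, u_m. Let Φ′ := Φ ⊕ u : R^{a+r} ⊕ R^m → R^a ⊕ R^m, regarded as a map R^{(a+m)+r} → R^{a+m} with component functionals (Φ₁, …, Φ_a, u₁, …, u_m), each extended by zero to the complementary summand. Then ker Φ′ = ker Φ under the canonical inclusion R^{a+r} ⊆ R^{a+r} ⊕ R^m, and 𝛅_r(Φ′) = 𝛅_r(Φ) as submodules of ∩^r_R ker Φ; in particular, the module of leading terms is unchanged when the presentation is stabilized by an isomorphism direct summand. -/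
/-!  Common definitions: exterior biduals and modules of leading terms
(following Büyükboduk–Cooper–Sakamoto and Das–Pal). -/

noncomputable section

open Module ExteriorAlgebra

namespace Paper

variable (R : Type*) [CommRing R]

/-- The `t`-th exterior bidual `∩^t_R M := (⋀^t_R M*)*`. -/
abbrev ExtBid (M : Type*) [AddCommGroup M] [Module R M] (t : ℕ) : Type _ :=
  Module.Dual R (⋀[R]^t (Module.Dual R M))

/-- Left wedge multiplication by a fixed element of `⋀^u M`:
`⋀^v M → ⋀^(u+v) M`, `x ↦ φ ∧ x`. -/
noncomputable def wedgeL {M : Type*} [AddCommGroup M] [Module R M] {u : ℕ} (φ : ⋀[R]^u M) (v : ℕ) :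
    (⋀[R]^v M) →ₗ[R] (⋀[R]^(u + v) M) :=
  LinearMap.restrict (LinearMap.mulLeft R (φ : ExteriorAlgebra R M))
    (p := ⋀[R]^v M) (q := ⋀[R]^(u+v) M)
    (fun x hx => by
      have h := Submodule.mul_mem_mul φ.2 hx
      rwa [← pow_add] at h)

/-- The alternating map `(M*)^t → R`, `(φ₁, …, φ_t) ↦ det (φ i (x j))`,
for a fixed family `x : Fin t → M`. -/
noncomputable def detAlt {M : Type*} [AddCommGroup M] [Module R M] {t : ℕ} (x : Fin t → M) :
    (Module.Dual R M) [⋀^Fin t]→ₗ[R] R :=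
  (Matrix.detRowAlternating).compLinearMap
    (LinearMap.pi fun j => Module.Dual.eval R M (x j))

/-- The linear map `⋀^t M → N` induced by an alternating map `M^t → N`
(the universal property of the exterior power). -/
noncomputable def liftPow {M N : Type*} [AddCommGroup M] [Module R M] [AddCommGroup N] [Module R N]
    (t : ℕ) (f : M [⋀^Fin t]→ₗ[R] N) : (⋀[R]^t M) →ₗ[R] N :=
  (ExteriorAlgebra.liftAlternating
      (Function.update (0 : ∀ i, M [⋀^Fin i]→ₗ[R] N) t f)) ∘ₗ (⋀[R]^t M).subtype

/-- The canonical image of `x₁ ∧ ⋯ ∧ x_t` in the exterior bidual `∩^t M`, namely the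
functional `φ₁ ∧ ⋯ ∧ φ_t ↦ det (φ i (x j))` on `⋀^t M*`. -/
noncomputable def dualPair {M : Type*} [AddCommGroup M] [Module R M] {t : ℕ} (x : Fin t → M) :
    ExtBid R M t :=
  liftPow R t (detAlt R x)

/-- `x₁ ∧ ⋯ ∧ x_n` as an element of the `n`-th exterior power. -/
noncomputable def wedge {M : Type*} [AddCommGroup M] [Module R M] {n : ℕ} (x : Fin n → M) : ⋀[R]^n M :=
  ⟨ExteriorAlgebra.ιMulti R n x, ExteriorAlgebra.ιMulti_range R n (Set.mem_range_self _)⟩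

/-- The canonical isomorphism `⋀^1 M → M`. -/
noncomputable def ofOne (M : Type*) [AddCommGroup M] [Module R M] : (⋀[R]^1 M) →ₗ[R] M :=
  liftPow R 1 ((AlternatingMap.ofSubsingleton R M M (0 : Fin 1)) LinearMap.id)

/-- The canonical map `M → ∩^1 M = (⋀^1 M*)*` (the evaluation map composed with the
canonical identification `⋀^1 M* ≅ M*`);  it is an isomorphism when `M` is reflexive. -/
noncomputable def toBidOne (M : Type*) [AddCommGroup M] [Module R M] : M →ₗ[R] ExtBid R M 1 :=
  (ofOne R (Module.Dual R M)).dualMap ∘ₗ Module.Dual.eval R M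

/-- Functoriality of exterior powers. -/
noncomputable def powMap {M N : Type*} [AddCommGroup M] [Module R M] [AddCommGroup N] [Module R N]
    (n : ℕ) (f : M →ₗ[R] N) : (⋀[R]^n M) →ₗ[R] (⋀[R]^n N) :=
  LinearMap.restrict (ExteriorAlgebra.map f).toLinearMap
    (p := ⋀[R]^n M) (q := ⋀[R]^n N)
    (fun x hx => by
      have h1 : Submodule.map (ExteriorAlgebra.map f).toLinearMap
          (LinearMap.range (ExteriorAlgebra.ι R (M := M)) ^ n)
          ≤ LinearMap.range (ExteriorAlgebra.ι R (M := N)) ^ n := by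
        rw [Submodule.map_pow]
        refine pow_le_pow_left' ?_ n
        rintro y ⟨z, ⟨m, rfl⟩, rfl⟩
        exact ⟨f m, (ExteriorAlgebra.map_apply_ι f m).symm⟩
      exact h1 (Submodule.mem_map_of_mem hx))

/-- The functorial map `∩^t M → ∩^t N` induced by `f : M → N`. -/
noncomputable def bidMap {M N : Type*} [AddCommGroup M] [Module R M] [AddCommGroup N] [Module R N]
    (t : ℕ) (f : M →ₗ[R] N) : ExtBid R M t →ₗ[R] ExtBid R N t :=
  (powMap R t f.dualMap).dualMap

section LeadingTerms

variable (a r : ℕ)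

/-- The component functionals `Φ₁, …, Φ_a` of `Φ : R^(a+r) → R^a`. -/
noncomputable def comps (Φ : (Fin (a + r) → R) →ₗ[R] (Fin a → R)) :
    Fin a → Module.Dual R (Fin (a + r) → R) :=
  fun i => (LinearMap.proj i) ∘ₗ Φ

/-- The image `(Φ_a ∘ ⋯ ∘ Φ₁)(e₁ ∧ ⋯ ∧ e_(a+r))` of the standard generator of
`det (R^(a+r)) = ⋀^(a+r) R^(a+r)` under the composite contraction by the component
functionals of `Φ`, viewed in `∩^r R^(a+r)`:  it is the functional
`ψ ↦ (e₁ ∧ ⋯ ∧ e_(a+r)) (Φ₁ ∧ ⋯ ∧ Φ_a ∧ ψ)` on `⋀^r (R^(a+r))*`. -/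
noncomputable def lead (Φ : (Fin (a + r) → R) →ₗ[R] (Fin a → R)) : ExtBid R (Fin (a + r) → R) r :=
  (wedgeL R (wedge R (comps R a r Φ)) r).dualMap
    (dualPair R (fun i : Fin (a + r) => Pi.single i (1 : R)))

/-- The canonical map `∩^r (ker Φ) → ∩^r R^(a+r)` induced by the inclusion
`ker Φ ⊆ R^(a+r)`; it is injective in all situations considered here. -/
noncomputable def canKer (Φ : (Fin (a + r) → R) →ₗ[R] (Fin a → R)) :
    ExtBid R (LinearMap.ker Φ) r →ₗ[R] ExtBid R (Fin (a + r) → R) r :=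
  bidMap R r (LinearMap.ker Φ).subtype

/-- The module of leading terms `𝛅_r(Φ) ⊆ ∩^r (ker Φ)`: the cyclic submodule
corresponding to the span of `(Φ_a ∘ ⋯ ∘ Φ₁)(e₁ ∧ ⋯ ∧ e_(a+r))` under the canonical
(injective) map `∩^r (ker Φ) → ∩^r R^(a+r)`. -/
noncomputable def bbdelta (Φ : (Fin (a + r) → R) →ₗ[R] (Fin a → R)) :
    Submodule R (ExtBid R (LinearMap.ker Φ) r) :=
  Submodule.comap (canKer R a r Φ) (Submodule.span R {lead R a r Φ})

end LeadingTerms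

/-- Evaluation identifying `∩^0 M` with `R`. -/
noncomputable def evalZero (M : Type*) [AddCommGroup M] [Module R M] : ExtBid R M 0 →ₗ[R] R :=
  Module.Dual.eval R (⋀[R]^0 (Module.Dual R M)) (wedge R (Fin.elim0))

/-- For `Φ : R^a → R^a` (the case `r = 0`, with the convention `∩^0 = R`), the leading
term `(Φ_a ∘ ⋯ ∘ Φ₁)(e₁ ∧ ⋯ ∧ e_a) ∈ R`. -/
noncomputable def lead0 {a : ℕ} (Φ : (Fin a → R) →ₗ[R] (Fin a → R)) : R :=
  evalZero R (Fin a → R) (lead R a 0 Φ)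

/-- `𝛅_0(Φ) ⊆ R` for a square map `Φ : R^a → R^a`. -/
noncomputable def bbdelta0 {a : ℕ} (Φ : (Fin a → R) →ₗ[R] (Fin a → R)) : Ideal R :=
  Ideal.span {lead0 R Φ}

/-- `𝛅_1(Φ)` for `Φ : R^(a+1) → R^a` (the case `r = 1`), regarded as a submodule of
`K = ker Φ` via the canonical map `K → ∩^1 K = K**` (an isomorphism for reflexive `K`). -/
noncomputable def bbdeltaInK (a : ℕ) (Φ : (Fin (a + 1) → R) →ₗ[R] (Fin a → R)) :
    Submodule R (LinearMap.ker Φ) :=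
  Submodule.comap (toBidOne R (LinearMap.ker Φ)) (bbdelta R a 1 Φ)

/-- `𝛅_1(Φ) = {δ_φ : δ ∈ 𝛅_2(Φ), φ ∈ ⋀^1 K*}` for `Φ : R^(a+2) → R^a` (the case `r = 2`),
where `δ_φ (ψ) = δ (φ ∧ ψ)`, regarded as a submodule of `K = ker Φ` via the canonical map
`K → ∩^1 K = K**`. -/
noncomputable def bbdeltaOneOfTwo (a : ℕ) (Φ : (Fin (a + 2) → R) →ₗ[R] (Fin a → R)) :
    Submodule R (LinearMap.ker Φ) :=
  Submodule.comap (toBidOne R (LinearMap.ker Φ))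
    (Submodule.span R {x : ExtBid R (LinearMap.ker Φ) 1 |
      ∃ δ ∈ bbdelta R a 2 Φ, ∃ φ : ⋀[R]^1 (Module.Dual R (LinearMap.ker Φ)),
        x = δ ∘ₗ wedgeL R φ 1})

/-- The length of a module: the Krull dimension of its lattice of submodules. -/
noncomputable def mlen (R M : Type*) [Ring R] [AddCommGroup M] [Module R M] : WithBot ℕ∞ :=
  Order.krullDim (Submodule R M)

/-- The length over `R_P` of the localization `M_P` of `M` at a prime `P`. -/
noncomputable def locLen (P : Ideal R) [P.IsPrime] (M : Type*) [AddCommGroup M] [Module R M] :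
    WithBot ℕ∞ :=
  mlen (Localization P.primeCompl) (LocalizedModule P.primeCompl M)

/-- A height-one prime ideal of a domain: a minimal nonzero prime. -/
noncomputable def HeightOne (P : Ideal R) : Prop :=
  P ≠ ⊥ ∧ ∀ Q : Ideal R, Q.IsPrime → Q < P → Q = ⊥

/-- A local ring is regular if its maximal ideal can be generated by `dim R` elements
(this is the standard definition of a regular local ring for Noetherian local rings). -/
noncomputable def IsRegularLocal (R : Type*) [CommRing R] [IsLocalRing R] : Prop :=
  ∃ s : Finset R, Ideal.span (s : Set R) = IsLocalRing.maximalIdeal R ∧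
    (s.card : WithBot ℕ∞) = ringKrullDim R

/-- The `0`-th Fitting ideal of `coker Φ` for `Φ : R^b → R^a`:  the ideal generated by
the `a × a` minors of (a matrix representing) `Φ`. -/
noncomputable def fitt (a b : ℕ) (Φ : (Fin b → R) →ₗ[R] (Fin a → R)) : Ideal R :=
  Ideal.span {x | ∃ g : Fin a → Fin b, Function.Injective g ∧
    x = Matrix.det (Matrix.of fun i j => Φ (Pi.single (g j) (1 : R)) i)}

end Paper

namespace Paper

variable (R : Type*) [CommRing R]

/-- The identification `Fin ((a+m)+r) ≃ Fin (a+r) ⊕ Fin m` (first block of size `a+r`,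
second block of size `m`). -/
def blockEquiv (a r m : ℕ) : Fin ((a + m) + r) ≃ (Fin (a + r) ⊕ Fin m) :=
  (finCongr (by omega)).trans finSumFinEquiv.symm

/-- The stabilized map `Φ′ = Φ ⊕ u : R^((a+m)+r) → R^(a+m)`, whose component
functionals are `(Φ₁, …, Φ_a, u₁, …, u_m)`, each extended by zero to the
complementary summand. -/
noncomputable def stab (a r m : ℕ) (Φ : (Fin (a + r) → R) →ₗ[R] (Fin a → R))
    (u : (Fin m → R) ≃ₗ[R] (Fin m → R)) :
    (Fin ((a + m) + r) → R) →ₗ[R] (Fin (a + m) → R) :=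
  LinearMap.pi fun i =>
    Sum.elim
      (fun i₀ => (comps R a r Φ i₀) ∘ₗ
        LinearMap.funLeft R R fun j : Fin (a + r) => (blockEquiv a r m).symm (Sum.inl j))
      (fun i₁ => ((LinearMap.proj i₁) ∘ₗ u.toLinearMap) ∘ₗ
        LinearMap.funLeft R R fun j : Fin m => (blockEquiv a r m).symm (Sum.inr j))
      (finSumFinEquiv.symm i)

/-- The canonical inclusion `R^(a+r) ⊆ R^(a+r) ⊕ R^m = R^((a+m)+r)`
(extension by zero on the second block). -/
noncomputable def incl (a r m : ℕ) :
    (Fin (a + r) → R) →ₗ[R] (Fin ((a + m) + r) → R) :=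
  LinearMap.pi fun k =>
    Sum.elim (fun j => LinearMap.proj j) (fun _ => (0 : Module.Dual R (Fin (a + r) → R)))
      (blockEquiv a r m k)

end Paper

namespace Paper
variable (R : Type*) [CommRing R]
variable {M N : Type*} [AddCommGroup M] [Module R M] [AddCommGroup N] [Module R N]

theorem liftPow_wedge {t : ℕ} (f : M [⋀^Fin t]→ₗ[R] N) (x : Fin t → M) :
    liftPow R t f (wedge R x) = f x := by
  simp [liftPow, wedge]

theorem dualPair_wedge {t : ℕ} (x : Fin t → M) (f : Fin t → Module.Dual R M) :
    dualPair R x (wedge R f) = Matrix.det (Matrix.of fun i j => f i (x j)) := by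
  simp [dualPair, liftPow_wedge, detAlt, Matrix.detRowAlternating]
  rfl

theorem wedgeL_wedge {u v : ℕ} (x : Fin u → M) (y : Fin v → M) :
    wedgeL R (wedge R x) v (wedge R y) = wedge R (Fin.append x y) := by
  apply Subtype.ext
  show (wedge R x : ExteriorAlgebra R M) * (wedge R y : ExteriorAlgebra R M) = _
  show ExteriorAlgebra.ιMulti R u x * ExteriorAlgebra.ιMulti R v y
      = ExteriorAlgebra.ιMulti R (u + v) (Fin.append x y)
  rw [ExteriorAlgebra.ιMulti_apply, ExteriorAlgebra.ιMulti_apply,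
    ExteriorAlgebra.ιMulti_apply, ← List.prod_append, ← List.ofFn_fin_append]
  have h : (fun i => ExteriorAlgebra.ι R (Fin.append x y i))
      = Fin.append (fun i => ExteriorAlgebra.ι R (x i)) (fun i => ExteriorAlgebra.ι R (y i)) := by
    funext i
    refine Fin.addCases (fun i₀ => ?_) (fun i₁ => ?_) i <;>
      simp [Fin.append_left, Fin.append_right]
  rw [h]

theorem powMap_wedge {n : ℕ} (f : M →ₗ[R] N) (x : Fin n → M) :
    powMap R n f (wedge R x) = wedge R (f ∘ x) := by
  apply Subtype.ext
  show ExteriorAlgebra.map f (ExteriorAlgebra.ιMulti R n x) = _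
  rw [ExteriorAlgebra.map_apply_ιMulti]
  rfl

end Paper
namespace Paper
variable (R : Type*) [CommRing R]
variable {M N P : Type*} [AddCommGroup M] [Module R M] [AddCommGroup N] [Module R N]
  [AddCommGroup P] [Module R P]

theorem wedge_span (n : ℕ) :
    Submodule.span R (Set.range (wedge R (M := M) (n := n))) = ⊤ := by
  apply Submodule.map_injective_of_injective (Submodule.injective_subtype (⋀[R]^n M))
  rw [Submodule.map_span, Submodule.map_subtype_top]
  have : (⋀[R]^n M).subtype '' Set.range (wedge R (M := M) (n := n))
      = Set.range (ExteriorAlgebra.ιMulti R n (M := M)) := by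
    ext z
    constructor
    · rintro ⟨w, ⟨x, rfl⟩, rfl⟩; exact ⟨x, rfl⟩
    · rintro ⟨x, rfl⟩; exact ⟨wedge R x, ⟨x, rfl⟩, rfl⟩
  rw [this, ExteriorAlgebra.ιMulti_span_fixedDegree]

theorem pow_ext {n : ℕ} {f g : (⋀[R]^n M) →ₗ[R] P}
    (h : ∀ x : Fin n → M, f (wedge R x) = g (wedge R x)) : f = g := by
  apply LinearMap.ext_on (wedge_span R n)
  rintro _ ⟨x, rfl⟩
  exact h x

theorem powMap_id (n : ℕ) : powMap R n (LinearMap.id (M := M)) = LinearMap.id := by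
  apply pow_ext
  intro x
  rw [powMap_wedge]
  rfl

theorem powMap_comp (n : ℕ) (f : M →ₗ[R] N) (g : N →ₗ[R] P) :
    powMap R n (g ∘ₗ f) = powMap R n g ∘ₗ powMap R n f := by
  apply pow_ext
  intro x
  simp only [LinearMap.comp_apply, powMap_wedge]
  rfl

theorem bidMap_id (t : ℕ) : bidMap R t (LinearMap.id (M := M)) = LinearMap.id := by
  unfold bidMap
  rw [show (LinearMap.id (M := M)).dualMap = LinearMap.id from rfl, powMap_id]
  rfl

theorem bidMap_comp (t : ℕ) (f : M →ₗ[R] N) (g : N →ₗ[R] P) :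
    bidMap R t (g ∘ₗ f) = bidMap R t g ∘ₗ bidMap R t f := by
  unfold bidMap
  rw [show (g ∘ₗ f).dualMap = f.dualMap ∘ₗ g.dualMap from rfl, powMap_comp]
  rfl

end Paper
namespace Paper
variable (R : Type*) [CommRing R]
variable (a r m : ℕ)

theorem incl_apply (y : Fin (a + r) → R) (k : Fin ((a + m) + r)) :
    incl R a r m y k = Sum.elim y (fun _ => (0 : R)) (blockEquiv a r m k) := by
  simp only [incl, LinearMap.pi_apply]
  cases blockEquiv a r m k <;> rfl

theorem incl_apply_inl (y : Fin (a + r) → R) (j : Fin (a + r)) :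
    incl R a r m y ((blockEquiv a r m).symm (Sum.inl j)) = y j := by
  rw [incl_apply, Equiv.apply_symm_apply]; rfl

theorem incl_apply_inr (y : Fin (a + r) → R) (j : Fin m) :
    incl R a r m y ((blockEquiv a r m).symm (Sum.inr j)) = 0 := by
  rw [incl_apply, Equiv.apply_symm_apply]; rfl

theorem incl_injective : Function.Injective (incl R a r m) := by
  intro y z h
  funext j
  have := congrFun h ((blockEquiv a r m).symm (Sum.inl j))
  rwa [incl_apply_inl, incl_apply_inl] at this

variable (Φ : (Fin (a + r) → R) →ₗ[R] (Fin a → R)) (u : (Fin m → R) ≃ₗ[R] (Fin m → R))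

theorem stab_apply_inl (x : Fin ((a + m) + r) → R) (i₀ : Fin a) :
    stab R a r m Φ u x (finSumFinEquiv (Sum.inl i₀))
      = Φ (fun j => x ((blockEquiv a r m).symm (Sum.inl j))) i₀ := by
  simp [stab, comps, LinearMap.funLeft, Function.comp_def]

theorem stab_apply_inr (x : Fin ((a + m) + r) → R) (i₁ : Fin m) :
    stab R a r m Φ u x (finSumFinEquiv (Sum.inr i₁))
      = u (fun j => x ((blockEquiv a r m).symm (Sum.inr j))) i₁ := by
  simp [stab, LinearMap.funLeft, Function.comp_def]

theorem ker_stab :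
    Submodule.map (incl R a r m) (LinearMap.ker Φ) = LinearMap.ker (stab R a r m Φ u) := by
  apply le_antisymm
  · rintro _ ⟨y, hy, rfl⟩
    rw [LinearMap.mem_ker]
    funext i
    obtain ⟨s, rfl⟩ := finSumFinEquiv.surjective i
    cases s with
    | inl i₀ =>
      rw [stab_apply_inl]
      have : (fun j => incl R a r m y ((blockEquiv a r m).symm (Sum.inl j))) = y := by
        funext j; exact incl_apply_inl R a r m y j
      rw [this]
      exact congrFun (LinearMap.mem_ker.mp hy) i₀
    | inr i₁ =>
      rw [stab_apply_inr]
      have : (fun j => incl R a r m y ((blockEquiv a r m).symm (Sum.inr j)))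
          = (0 : Fin m → R) := by
        funext j; exact incl_apply_inr R a r m y j
      rw [this, map_zero]
      rfl
  · intro x hx
    rw [LinearMap.mem_ker] at hx
    have hz : (fun j => x ((blockEquiv a r m).symm (Sum.inr j))) = (0 : Fin m → R) := by
      apply u.injective
      rw [map_zero]
      funext i₁
      rw [← stab_apply_inr R a r m Φ u x i₁, hx]
      rfl
    refine ⟨fun j => x ((blockEquiv a r m).symm (Sum.inl j)), ?_, ?_⟩
    · show Φ _ = 0
      funext i₀
      rw [← stab_apply_inl R a r m Φ u x i₀, hx]
      rfl
    · funext k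
      rw [incl_apply]
      rcases hk : blockEquiv a r m k with j | j
      · simp only [Sum.elim_inl]
        rw [← hk, Equiv.symm_apply_apply]
      · simp only [Sum.elim_inr]
        have := congrFun hz j
        simp only [Pi.zero_apply] at this
        rw [← hk, Equiv.symm_apply_apply] at this
        exact this.symm

end Paper
namespace Paper
variable (R : Type*) [CommRing R]

theorem lead_apply (a r : ℕ) (Φ : (Fin (a + r) → R) →ₗ[R] (Fin a → R))
    (g : Fin r → Module.Dual R (Fin (a + r) → R)) :
    lead R a r Φ (wedge R g) = Matrix.det (Matrix.of fun i j =>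
      (Fin.append (comps R a r Φ) g) i (Pi.single j (1 : R))) := by
  show dualPair R (fun i : Fin (a + r) => Pi.single i (1 : R))
      (wedgeL R (wedge R (comps R a r Φ)) r (wedge R g)) = _
  rw [wedgeL_wedge, dualPair_wedge]

theorem bidMap_apply' {M N : Type*} [AddCommGroup M] [Module R M] [AddCommGroup N] [Module R N]
    (t : ℕ) (f : M →ₗ[R] N) (X : ExtBid R M t) (ψ : ⋀[R]^t (Module.Dual R N)) :
    bidMap R t f X ψ = X (powMap R t f.dualMap ψ) := rfl

theorem bidMap_lead_apply (a r m : ℕ) (Φ : (Fin (a + r) → R) →ₗ[R] (Fin a → R))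
    (g : Fin r → Module.Dual R (Fin ((a + m) + r) → R)) :
    bidMap R r (incl R a r m) (lead R a r Φ) (wedge R g) = Matrix.det (Matrix.of fun i j =>
      (Fin.append (comps R a r Φ) (fun k => (incl R a r m).dualMap (g k))) i
        (Pi.single j (1 : R))) := by
  rw [bidMap_apply', powMap_wedge, lead_apply]
  rfl

/-- Row reindexing for the stabilized matrix. -/
def rowEquiv (a r m : ℕ) : Fin ((a + m) + r) ≃ (Fin (a + r) ⊕ Fin m) :=
  (finSumFinEquiv.symm.trans
    ((finSumFinEquiv.symm.sumCongr (Equiv.refl (Fin r))).trans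
      ((Equiv.sumAssoc (Fin a) (Fin m) (Fin r)).trans
        (((Equiv.refl (Fin a)).sumCongr (Equiv.sumComm (Fin m) (Fin r))).trans
          ((Equiv.sumAssoc (Fin a) (Fin r) (Fin m)).symm.trans
            (finSumFinEquiv.sumCongr (Equiv.refl (Fin m))))))))

theorem rowEquiv_apply₁ (a r m : ℕ) (i₀ : Fin a) :
    rowEquiv a r m (Fin.castAdd r (Fin.castAdd m i₀)) = Sum.inl (Fin.castAdd r i₀) := by
  simp [rowEquiv]

theorem rowEquiv_apply₂ (a r m : ℕ) (i₁ : Fin m) :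
    rowEquiv a r m (Fin.castAdd r (Fin.natAdd a i₁)) = Sum.inr i₁ := by
  simp [rowEquiv]

theorem rowEquiv_apply₃ (a r m : ℕ) (k : Fin r) :
    rowEquiv a r m (Fin.natAdd (a + m) k) = Sum.inl (Fin.natAdd a k) := by
  simp [rowEquiv]

theorem rowEquiv_symm₁ (a r m : ℕ) (i₀ : Fin a) :
    (rowEquiv a r m).symm (Sum.inl (Fin.castAdd r i₀)) = Fin.castAdd r (Fin.castAdd m i₀) := by
  rw [Equiv.symm_apply_eq, rowEquiv_apply₁]

theorem rowEquiv_symm₂ (a r m : ℕ) (i₁ : Fin m) :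
    (rowEquiv a r m).symm (Sum.inr i₁) = Fin.castAdd r (Fin.natAdd a i₁) := by
  rw [Equiv.symm_apply_eq, rowEquiv_apply₂]

theorem rowEquiv_symm₃ (a r m : ℕ) (k : Fin r) :
    (rowEquiv a r m).symm (Sum.inl (Fin.natAdd a k)) = Fin.natAdd (a + m) k := by
  rw [Equiv.symm_apply_eq, rowEquiv_apply₃]

theorem single_comp_inj {α β : Type*} [DecidableEq α] [DecidableEq β] (f : α → β)
    (hf : Function.Injective f) (x : α) :
    (fun j => (Pi.single (f x) (1 : R) : β → R) (f j)) = (Pi.single x (1 : R) : α → R) := by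
  funext j
  rw [Pi.single_apply, Pi.single_apply]
  exact if_congr hf.eq_iff rfl rfl

theorem incl_single (a r m : ℕ) (j : Fin (a + r)) :
    incl R a r m (Pi.single j (1 : R))
      = Pi.single ((blockEquiv a r m).symm (Sum.inl j)) (1 : R) := by
  funext t
  rw [incl_apply, Pi.single_apply]
  rcases ht : blockEquiv a r m t with j' | j'
  · simp only [Sum.elim_inl]
    rw [Pi.single_apply]
    refine if_congr ?_ rfl rfl
    rw [Equiv.eq_symm_apply, ht]
    exact Sum.inl_injective.eq_iff.symm
  · simp only [Sum.elim_inr]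
    rw [if_neg]
    intro h
    apply_fun blockEquiv a r m at h
    rw [ht, Equiv.apply_symm_apply] at h
    exact nomatch h

end Paper
namespace Paper
variable (R : Type*) [CommRing R]

/-- The unit scalar relating `lead Φ'` and the image of `lead Φ`. -/
noncomputable def cst (a r m : ℕ) (u : (Fin m → R) ≃ₗ[R] (Fin m → R)) : R :=
  ((Equiv.Perm.sign ((blockEquiv a r m).symm.trans (rowEquiv a r m)) : ℤ) : R) *
    Matrix.det (LinearMap.toMatrix' u.toLinearMap)

theorem isUnit_cst (a r m : ℕ) (u : (Fin m → R) ≃ₗ[R] (Fin m → R)) :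
    IsUnit (cst R a r m u) := by
  apply IsUnit.mul
  · exact RingHom.isUnit_map (Int.castRingHom R) (Equiv.Perm.sign _).isUnit
  · have h : LinearMap.toMatrix' u.toLinearMap * LinearMap.toMatrix' u.symm.toLinearMap = 1 := by
      rw [← LinearMap.toMatrix'_comp]
      have : u.toLinearMap ∘ₗ u.symm.toLinearMap = LinearMap.id := by
        ext x; simp
      rw [this, LinearMap.toMatrix'_id]
    have := congrArg Matrix.det h
    rw [Matrix.det_mul, Matrix.det_one] at this
    exact IsUnit.of_mul_eq_one _ this

theorem lead_stab (a r m : ℕ) (Φ : (Fin (a + r) → R) →ₗ[R] (Fin a → R))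
    (u : (Fin m → R) ≃ₗ[R] (Fin m → R)) :
    lead R (a + m) r (stab R a r m Φ u)
      = cst R a r m u • bidMap R r (incl R a r m) (lead R a r Φ) := by
  apply pow_ext
  intro g
  rw [lead_apply, LinearMap.smul_apply, bidMap_lead_apply, smul_eq_mul]
  set σ := blockEquiv a r m with hσ
  set ρ := rowEquiv a r m with hρ
  set B : Matrix (Fin ((a + m) + r)) (Fin ((a + m) + r)) R :=
    Matrix.of fun i j => (Fin.append (comps R (a + m) r (stab R a r m Φ u)) g) i
      (Pi.single j (1 : R)) with hB
  set A : Matrix (Fin (a + r)) (Fin (a + r)) R :=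
    Matrix.of fun i j => (Fin.append (comps R a r Φ) (fun k => (incl R a r m).dualMap (g k))) i
      (Pi.single j (1 : R)) with hA
  set C := B.submatrix ρ.symm σ.symm with hC
  have hsingl : ∀ j : Fin (a + r),
      (fun j' => (Pi.single (σ.symm (Sum.inl j)) (1 : R) : Fin ((a + m) + r) → R)
          (σ.symm (Sum.inl j')))
        = (Pi.single j (1 : R) : Fin (a + r) → R) :=
    fun j => single_comp_inj R (fun j' => σ.symm (Sum.inl j'))
      (fun _ _ h => Sum.inl_injective (σ.symm.injective h)) j
  have hsingr : ∀ j : Fin m,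
      (fun j' => (Pi.single (σ.symm (Sum.inr j)) (1 : R) : Fin ((a + m) + r) → R)
          (σ.symm (Sum.inr j')))
        = (Pi.single j (1 : R) : Fin m → R) :=
    fun j => single_comp_inj R (fun j' => σ.symm (Sum.inr j'))
      (fun _ _ h => Sum.inr_injective (σ.symm.injective h)) j
  have h11 : C.toBlocks₁₁ = A := by
    ext i j
    show B (ρ.symm (Sum.inl i)) (σ.symm (Sum.inl j)) = A i j
    refine Fin.addCases (fun i₀ => ?_) (fun k => ?_) i
    · rw [rowEquiv_symm₁, hB, hA]
      show (Fin.append (comps R (a + m) r (stab R a r m Φ u)) g)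
          (Fin.castAdd r (Fin.castAdd m i₀)) (Pi.single (σ.symm (Sum.inl j)) 1)
        = (Fin.append (comps R a r Φ) (fun k => (incl R a r m).dualMap (g k)))
          (Fin.castAdd r i₀) (Pi.single j 1)
      rw [Fin.append_left, Fin.append_left]
      show stab R a r m Φ u (Pi.single (σ.symm (Sum.inl j)) 1) (Fin.castAdd m i₀)
        = Φ (Pi.single j 1) i₀
      rw [← finSumFinEquiv_apply_left, stab_apply_inl, ← hσ, hsingl]
    · rw [rowEquiv_symm₃, hB, hA]
      show (Fin.append (comps R (a + m) r (stab R a r m Φ u)) g)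
          (Fin.natAdd (a + m) k) (Pi.single (σ.symm (Sum.inl j)) 1)
        = (Fin.append (comps R a r Φ) (fun k => (incl R a r m).dualMap (g k)))
          (Fin.natAdd a k) (Pi.single j 1)
      rw [Fin.append_right, Fin.append_right]
      show g k (Pi.single (σ.symm (Sum.inl j)) 1) = g k (incl R a r m (Pi.single j 1))
      rw [incl_single, hσ]
  have h21 : C.toBlocks₂₁ = 0 := by
    ext i₁ j
    show B (ρ.symm (Sum.inr i₁)) (σ.symm (Sum.inl j)) = 0
    rw [rowEquiv_symm₂, hB]
    show (Fin.append (comps R (a + m) r (stab R a r m Φ u)) g)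
        (Fin.castAdd r (Fin.natAdd a i₁)) (Pi.single (σ.symm (Sum.inl j)) 1) = 0
    rw [Fin.append_left]
    show stab R a r m Φ u (Pi.single (σ.symm (Sum.inl j)) 1) (Fin.natAdd a i₁) = 0
    rw [← finSumFinEquiv_apply_right, stab_apply_inr, ← hσ]
    have hz : (fun j' => (Pi.single (σ.symm (Sum.inl j)) (1 : R) : Fin ((a + m) + r) → R)
          (σ.symm (Sum.inr j')))
        = (0 : Fin m → R) := by
      funext j'
      rw [Pi.single_apply, if_neg, Pi.zero_apply]
      intro h
      exact nomatch σ.symm.injective h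
    rw [hz, map_zero]
    rfl
  have h22 : C.toBlocks₂₂ = LinearMap.toMatrix' u.toLinearMap := by
    ext i₁ j
    show B (ρ.symm (Sum.inr i₁)) (σ.symm (Sum.inr j)) = _
    rw [rowEquiv_symm₂, hB]
    show (Fin.append (comps R (a + m) r (stab R a r m Φ u)) g)
        (Fin.castAdd r (Fin.natAdd a i₁)) (Pi.single (σ.symm (Sum.inr j)) 1) = _
    rw [Fin.append_left]
    show stab R a r m Φ u (Pi.single (σ.symm (Sum.inr j)) 1) (Fin.natAdd a i₁) = _
    rw [← finSumFinEquiv_apply_right, stab_apply_inr, ← hσ, hsingr,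
      LinearMap.toMatrix'_apply]
    have hs : (Pi.single j (1 : R) : Fin m → R)
        = fun j' => if j' = j then (1 : R) else 0 := by
      funext j'
      exact Pi.single_apply j (1 : R) j'
    rw [hs]
    rfl
  have hdetC : C.det = A.det * (LinearMap.toMatrix' u.toLinearMap).det := by
    rw [← Matrix.fromBlocks_toBlocks C, h11, h21, h22, Matrix.det_fromBlocks_zero₂₁]
  have hperm : B.submatrix σ.symm σ.symm = C.submatrix (σ.symm.trans ρ) id := by
    ext i j
    simp [hC, Matrix.submatrix_apply]
  have : B.det = ((Equiv.Perm.sign (σ.symm.trans ρ) : ℤ) : R) * C.det := by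
    rw [← Matrix.det_submatrix_equiv_self σ.symm B, hperm, Matrix.det_permute]
  rw [this, hdetC, cst]
  ring
end Paper

set_option maxHeartbeats 2000000
set_option linter.all false

open Paper in
/-- Stabilizing a presentation `Φ : R^(a+r) → R^a` by an isomorphism
direct summand `u : R^m ≃ R^m` does not change the kernel (under the canonical
inclusion `R^(a+r) ⊆ R^(a+r) ⊕ R^m`) nor the module of leading terms `𝛅_r`. -/
theorem statement_1 (R : Type*) [CommRing R] (a r m : ℕ) (ha : 1 ≤ a)
    (Φ : (Fin (a + r) → R) →ₗ[R] (Fin a → R))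
    (u : (Fin m → R) ≃ₗ[R] (Fin m → R))
    (hker : ∀ x ∈ LinearMap.ker Φ, incl R a r m x ∈ LinearMap.ker (stab R a r m Φ u)) :
    Submodule.map (incl R a r m) (LinearMap.ker Φ) = LinearMap.ker (stab R a r m Φ u) ∧
    Submodule.map (bidMap R r ((incl R a r m).restrict hker)) (bbdelta R a r Φ) =
      bbdelta R (a + m) r (stab R a r m Φ u) := by
  refine ⟨ker_stab R a r m Φ u, ?_⟩
  set Φ' := stab R a r m Φ u with hΦ'
  set ι' := (incl R a r m).restrict hker with hι'
  -- bijectivity of ι'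
  have hinj : Function.Injective ι' := by
    intro x y h
    apply Subtype.ext
    apply incl_injective R a r m
    exact congrArg Subtype.val h
  have hsurj : Function.Surjective ι' := by
    rintro ⟨y, hy⟩
    rw [← ker_stab R a r m Φ u] at hy
    obtain ⟨x, hx, rfl⟩ := hy
    exact ⟨⟨x, hx⟩, rfl⟩
  set e := LinearEquiv.ofBijective ι' ⟨hinj, hsurj⟩ with he
  -- bidMap ι' is bijective
  have hback : ∀ X, bidMap R r e.symm.toLinearMap (bidMap R r ι' X) = X := by
    intro X
    rw [← LinearMap.comp_apply, ← bidMap_comp]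
    have : e.symm.toLinearMap ∘ₗ ι' = LinearMap.id := by
      refine LinearMap.ext fun x => ?_
      exact e.symm_apply_apply x
    rw [this, bidMap_id, LinearMap.id_apply]
  have hfwd : ∀ X, bidMap R r ι' (bidMap R r e.symm.toLinearMap X) = X := by
    intro X
    rw [← LinearMap.comp_apply, ← bidMap_comp]
    have : ι' ∘ₗ e.symm.toLinearMap = LinearMap.id := by
      refine LinearMap.ext fun x => ?_
      exact e.apply_symm_apply x
    rw [this, bidMap_id, LinearMap.id_apply]
  -- injectivity of `bidMap incl`
  have hIinj : Function.Injective (bidMap R r (incl R a r m)) := by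
    set pr := LinearMap.funLeft R R
      (fun j : Fin (a + r) => (blockEquiv a r m).symm (Sum.inl j)) with hpr
    have hpi : pr ∘ₗ incl R a r m = LinearMap.id := by
      ext y j
      exact incl_apply_inl R a r m _ j
    intro X Y h
    have := congrArg (bidMap R r pr) h
    rwa [← LinearMap.comp_apply, ← LinearMap.comp_apply, ← bidMap_comp, hpi, bidMap_id,
      LinearMap.id_apply, LinearMap.id_apply] at this
  -- commuting square
  have hcomm : ∀ w, canKer R (a + m) r Φ' (bidMap R r ι' w)
      = bidMap R r (incl R a r m) (canKer R a r Φ w) := by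
    intro w
    rw [← LinearMap.comp_apply, ← LinearMap.comp_apply]
    show (bidMap R r (LinearMap.ker Φ').subtype ∘ₗ bidMap R r ι') w
      = (bidMap R r (incl R a r m) ∘ₗ bidMap R r (LinearMap.ker Φ).subtype) w
    rw [← bidMap_comp, ← bidMap_comp]
    congr 1
  -- span equality
  have hspan : Submodule.span R {lead R (a + m) r Φ'}
      = Submodule.span R {bidMap R r (incl R a r m) (lead R a r Φ)} := by
    rw [hΦ', lead_stab R a r m Φ u]
    exact Submodule.span_singleton_smul_eq (isUnit_cst R a r m u) _
  apply le_antisymm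
  · rintro _ ⟨w, hw, rfl⟩
    have hw' : canKer R a r Φ w ∈ Submodule.span R {lead R a r Φ} :=
      Submodule.mem_comap.mp hw
    rw [Submodule.mem_span_singleton] at hw'
    obtain ⟨t, ht⟩ := hw'
    refine Submodule.mem_comap.mpr ?_
    rw [hcomm, hspan, ← ht, map_smul]
    exact Submodule.smul_mem _ t (Submodule.mem_span_singleton_self _)
  · intro y hy
    have hy' : canKer R (a + m) r Φ' y ∈ Submodule.span R {lead R (a + m) r Φ'} :=
      Submodule.mem_comap.mp hy
    rw [hspan, Submodule.mem_span_singleton] at hy'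
    obtain ⟨t, ht⟩ := hy'
    have hwy : bidMap R r ι' (bidMap R r e.symm.toLinearMap y) = y := hfwd y
    have ht2 : bidMap R r (incl R a r m) (t • lead R a r Φ)
        = bidMap R r (incl R a r m) (canKer R a r Φ (bidMap R r e.symm.toLinearMap y)) :=
      ((bidMap R r (incl R a r m)).map_smul t (lead R a r Φ)).trans
        (ht.trans ((congrArg (canKer R (a + m) r Φ') hwy).symm.trans
          (hcomm (bidMap R r e.symm.toLinearMap y))))
    refine ⟨bidMap R r e.symm.toLinearMap y, Submodule.mem_comap.mpr ?_, hwy⟩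
    exact hIinj ht2 ▸ Submodule.smul_mem _ t (Submodule.mem_span_singleton_self _)
end
end

section
/- Let S be an Artinian commutative local ring that is injective as a module over itself (i.e. a zero-dimensional Gorenstein local ring), M a finitely generated S-module, and δ ∈ M* = Hom_S(M, S). Then the S-linear map Hom_S(Sδ, S) → S, φ ↦ φ(δ), is injective with image the ideal δ(M) = im(δ) ⊆ S; in particular there is a natural isomorphism (Sδ)* ≅ im(δ). -/
/-- Over a zero-dimensional Gorenstein local ring `S` (an Artinian
commutative local ring that is injective as a module over itself), for a finitely
generated `S`-module `M` and `δ ∈ M* = Hom_S(M, S)`, the map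
`Hom_S(Sδ, S) → S, φ ↦ φ(δ)` is injective with image the ideal `im(δ) = δ(M)`;
in particular `(Sδ)* ≅ im(δ)`. -/
theorem statement_4 (S : Type*) [CommRing S] [IsArtinianRing S] [IsLocalRing S]
    [Module.Injective S S]
    (M : Type*) [AddCommGroup M] [Module S M] [Module.Finite S M]
    (δ : Module.Dual S M) :
    Function.Injective (fun φ : Module.Dual S ↥(Submodule.span S {δ}) =>
      φ ⟨δ, Submodule.mem_span_singleton_self δ⟩) ∧
    Set.range (fun φ : Module.Dual S ↥(Submodule.span S {δ}) =>
      φ ⟨δ, Submodule.mem_span_singleton_self δ⟩) = (LinearMap.range δ : Set S) := by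
  set δ' : ↥(Submodule.span S {δ}) := ⟨δ, Submodule.mem_span_singleton_self δ⟩ with hδ'
  have hgen : ∀ x : ↥(Submodule.span S {δ}), ∃ s : S, s • δ' = x := by
    rintro ⟨x, hx⟩
    obtain ⟨s, rfl⟩ := Submodule.mem_span_singleton.mp hx
    exact ⟨s, rfl⟩
  constructor
  · intro φ₁ φ₂ h
    simp only at h
    ext x
    obtain ⟨s, rfl⟩ := hgen x
    simp only [map_smul, h]
  · ext s
    simp only [Set.mem_range, SetLike.mem_coe]
    constructor
    · rintro ⟨φ, rfl⟩
      -- extend φ along the injective map f : span S {δ} →ₗ (Fin n → S)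
      obtain ⟨n, m, hm⟩ := Module.Finite.exists_fin (R := S) (M := M)
      let f : ↥(Submodule.span S {δ}) →ₗ[S] (Fin n → S) :=
        { toFun := fun x i => (x : Module.Dual S M) (m i)
          map_add' := by intro x y; ext i; simp
          map_smul' := by intro s x; ext i; simp }
      have hf : Function.Injective f := by
        intro x y hxy
        ext1
        refine LinearMap.ext_on_range hm fun i => ?_
        exact congrFun hxy i
      obtain ⟨H, hH⟩ := Module.Injective.extension_property S S ↥(Submodule.span S {δ}) (Fin n → S) f hf φ
      have key : φ δ' = H (fun i => δ (m i)) := by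
        have := congrArg (fun g : _ →ₗ[S] S => g δ') hH
        simpa [f] using this.symm
      rw [key]
      have : (fun i => δ (m i)) = ∑ i : Fin n, δ (m i) • (Pi.single i 1 : Fin n → S) := by
        ext j
        simp [Pi.single_apply, eq_comm]
      rw [this, map_sum]
      refine ⟨∑ i : Fin n, H ((Pi.single i 1 : Fin n → S)) • m i, ?_⟩
      rw [map_sum]
      exact Finset.sum_congr rfl fun i _ => by simp [mul_comm]
    · rintro ⟨m₀, rfl⟩
      refine ⟨(LinearMap.applyₗ m₀).comp ((Submodule.span S {δ}).subtype), rfl⟩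
end

section
/- Let R be a commutative Noetherian local ring, N a finite free R-module, and f : N → N an R-linear endomorphism such that coker f is a free R-module. Then ker f is a finite free R-module and a direct summand of N, and for every commutative R-algebra S the natural map (ker f) ⊗_R S → ker(f ⊗_R id_S : N ⊗_R S → N ⊗_R S) is an isomorphism. -/
open LinearMap

/-- A split surjection has complemented kernel. -/
private lemma split_ker_isCompl {R E P : Type*} [CommRing R] [AddCommGroup E] [Module R E]
    [AddCommGroup P] [Module R P] (g : E →ₗ[R] P) (s : P →ₗ[R] E)
    (hs : g ∘ₗ s = LinearMap.id) : IsCompl (LinearMap.ker g) (LinearMap.range s) := by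
  have hgs : ∀ y, g (s y) = y := fun y => congrArg (· y) (congrArg DFunLike.coe hs)
  constructor
  · rw [disjoint_iff_inf_le]
    rintro x ⟨hx1, y, rfl⟩
    have : y = 0 := by rw [← hgs y]; exact hx1
    simp [this]
  · rw [codisjoint_iff_le_sup]
    intro x _
    have h1 : x - s (g x) ∈ LinearMap.ker g := by
      simp [LinearMap.mem_ker, hgs]
    have h2 : s (g x) ∈ LinearMap.range s := ⟨g x, rfl⟩
    have : x = (x - s (g x)) + s (g x) := by abel
    rw [this]
    exact Submodule.add_mem_sup h1 h2

/-- Over a commutative Noetherian local ring `R`, if `N` is finite free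
and `f : N → N` has free cokernel, then `ker f` is finite free, a direct summand of
`N`, and its formation commutes with any base change `R → S`:  the natural map
`(ker f) ⊗_R S → ker (f ⊗_R id_S)` is an isomorphism. -/
theorem statement_18 (R : Type*) [CommRing R] [IsNoetherianRing R] [IsLocalRing R]
    (N : Type*) [AddCommGroup N] [Module R N] [Module.Finite R N] [Module.Free R N]
    (f : N →ₗ[R] N)
    (hcoker : Module.Free R (N ⧸ LinearMap.range f)) :
    Module.Free R ↥(LinearMap.ker f) ∧ Module.Finite R ↥(LinearMap.ker f) ∧
    (∃ q : Submodule R N, IsCompl (LinearMap.ker f) q) ∧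
    ∀ (S : Type*) [CommRing S] [Algebra R S],
      Function.Bijective
        (LinearMap.codRestrict (LinearMap.ker (LinearMap.baseChange S f))
          (LinearMap.baseChange S (LinearMap.ker f).subtype)
          (fun x => by
            rw [LinearMap.mem_ker, ← LinearMap.comp_apply, ← LinearMap.baseChange_comp]
            have h0 : f ∘ₗ (LinearMap.ker f).subtype = 0 := by
              ext y
              simpa using y.2
            rw [h0, LinearMap.baseChange_zero, LinearMap.zero_apply])) := by
  haveI := hcoker
  haveI : Module.Projective R (N ⧸ LinearMap.range f) := Module.Projective.of_free
  -- the quotient map splits, so `range f` is a direct summand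
  obtain ⟨s, hs⟩ := (Submodule.mkQ (LinearMap.range f)).exists_rightInverse_of_surjective
    (Submodule.range_mkQ _)
  have hcompl1 : IsCompl (LinearMap.range f) (LinearMap.range s) := by
    have := split_ker_isCompl _ s hs
    rwa [Submodule.ker_mkQ] at this
  -- `range f` is projective
  haveI : Module.Projective R (LinearMap.range f) :=
    Module.Projective.of_split (LinearMap.range f).subtype
      ((LinearMap.range f).projectionOnto _ hcompl1)
      (by ext x; simp)
  -- `rangeRestrict f` splits, so `ker f` is a direct summand
  obtain ⟨t, ht⟩ := f.rangeRestrict.exists_rightInverse_of_surjective f.range_rangeRestrict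
  have hcompl2 : IsCompl (LinearMap.ker f) (LinearMap.range t) := by
    have := split_ker_isCompl f.rangeRestrict t ht
    rwa [LinearMap.ker_rangeRestrict] at this
  haveI hproj : Module.Projective R (LinearMap.ker f) :=
    Module.Projective.of_split (LinearMap.ker f).subtype
      ((LinearMap.ker f).projectionOnto _ hcompl2)
      (by ext x; simp)
  haveI hN : IsNoetherian R N := isNoetherian_of_isNoetherianRing_of_finite R N
  haveI hfin : Module.Finite R (LinearMap.ker f) :=
    Module.Finite.iff_fg.mpr (IsNoetherian.noetherian _)
  haveI : Module.FinitePresentation R (LinearMap.ker f) :=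
    Module.finitePresentation_of_finite R _
  haveI hfree : Module.Free R (LinearMap.ker f) := Module.free_of_flat_of_isLocalRing
  refine ⟨hfree, hfin, ⟨_, hcompl2⟩, ?_⟩
  intro S _ _
  -- retractions
  set rk := (LinearMap.ker f).projectionOnto _ hcompl2 with hrk
  set rr := (LinearMap.range f).projectionOnto _ hcompl1 with hrr
  have hrk' : rk ∘ₗ (LinearMap.ker f).subtype = LinearMap.id := by ext x; simp [hrk]
  have hrr' : rr ∘ₗ (LinearMap.range f).subtype = LinearMap.id := by ext x; simp [hrr]
  constructor
  · -- injectivity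
    intro x y hxy
    have hxy' : (LinearMap.baseChange S (LinearMap.ker f).subtype) x
        = (LinearMap.baseChange S (LinearMap.ker f).subtype) y :=
      congrArg Subtype.val hxy
    have : LinearMap.baseChange S rk ∘ₗ LinearMap.baseChange S (LinearMap.ker f).subtype
        = LinearMap.id := by
      rw [← LinearMap.baseChange_comp, hrk', LinearMap.baseChange_id]
    have hinv : ∀ z, LinearMap.baseChange S rk (LinearMap.baseChange S (LinearMap.ker f).subtype z)
        = z := fun z => congrArg (· z) (congrArg DFunLike.coe this)
    rw [← hinv x, ← hinv y, hxy']
  · -- surjectivity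
    rintro ⟨x, hx⟩
    -- exactness of tensored sequence
    have hexact : Function.Exact ((LinearMap.ker f).subtype) f.rangeRestrict :=
      LinearMap.exact_iff.mpr (by rw [LinearMap.ker_rangeRestrict, Submodule.range_subtype])
    have htens : Function.Exact (LinearMap.lTensor S (LinearMap.ker f).subtype)
        (LinearMap.lTensor S f.rangeRestrict) :=
      lTensor_exact S hexact f.surjective_rangeRestrict
    have hx0 : LinearMap.lTensor S f x = 0 := by
      rw [← LinearMap.baseChange_eq_ltensor]
      exact hx
    have hfac : LinearMap.lTensor S f
        = LinearMap.lTensor S (LinearMap.range f).subtype ∘ₗ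
          LinearMap.lTensor S f.rangeRestrict := by
      rw [← LinearMap.lTensor_comp]
      rfl
    have hinj : Function.Injective (LinearMap.lTensor S (LinearMap.range f).subtype) := by
      have : LinearMap.lTensor S rr ∘ₗ LinearMap.lTensor S (LinearMap.range f).subtype
          = LinearMap.id := by
        rw [← LinearMap.lTensor_comp, hrr', LinearMap.lTensor_id]
      intro a b hab
      have h1 : ∀ z, LinearMap.lTensor S rr (LinearMap.lTensor S (LinearMap.range f).subtype z)
          = z := fun z => congrArg (· z) (congrArg DFunLike.coe this)
      rw [← h1 a, ← h1 b, hab]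
    have hx1 : LinearMap.lTensor S f.rangeRestrict x = 0 := by
      apply hinj
      rw [map_zero, ← LinearMap.comp_apply, ← hfac, hx0]
    obtain ⟨y, hy⟩ := (htens x).mp hx1
    refine ⟨y, ?_⟩
    apply Subtype.ext
    show LinearMap.baseChange S (LinearMap.ker f).subtype y = x
    rw [LinearMap.baseChange_eq_ltensor] at *
    exact hy
end
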